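/- Iterating the constraint-violation bound: if y⁰ satisfies the exact constraint ((∇y⁰)ᵀ∇y⁰ = I₂ at a point) and each step satisfies the linearized constraint with increments dᵏ, then after K steps |(∇yᴷ)ᵀ∇yᴷ − I₂| ≤ τ² Σ_{k=1}^{K} |∇dᵏ|², so if additionally Σ_k |∇dᵏ|² ≤ C/τ (as follows from an energy bound Σ_k τ‖dᵏ‖² ≤ C), the total violation is ≤ Cτ, independent of K. -/

import Mathlib

open Matrix

/-- Frobenius norm of a real matrix. -/
noncomputable def frobNorm {m n : Type*} [Fintype m] [Fintype n]
    (M : Matrix m n ℝ) : ℝ :=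
  Real.sqrt (∑ i, ∑ j, (M i j) ^ 2)

attribute [local instance] Matrix.frobeniusNormedAddCommGroup Matrix.frobeniusNormedSpace

lemma frobNorm_eq_norm {m n : Type*} [Fintype m] [Fintype n]
    (M : Matrix m n ℝ) : frobNorm M = ‖M‖ := by
  rw [Matrix.frobenius_norm_def, frobNorm, Real.sqrt_eq_rpow]
  congr 1
  simp [sq_abs]

theorem iterated_constraint_violation
    (τ : ℝ) (hτ : 0 < τ) (K : ℕ)
    (Y D : ℕ → Matrix (Fin 3) (Fin 2) ℝ)
    (hstep : ∀ k, 1 ≤ k → k ≤ K → Y k = Y (k - 1) + τ • D k)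
    (hlin : ∀ k, 1 ≤ k → k ≤ K → (D k)ᵀ * Y (k - 1) + (Y (k - 1))ᵀ * D k = 0)
    (h0 : (Y 0)ᵀ * Y 0 = 1) :
    frobNorm ((Y K)ᵀ * Y K - 1) ≤ τ ^ 2 * ∑ k ∈ Finset.Icc 1 K, (frobNorm (D k)) ^ 2 ∧
    ∀ C : ℝ, (∑ k ∈ Finset.Icc 1 K, (frobNorm (D k)) ^ 2 ≤ C / τ) →
      frobNorm ((Y K)ᵀ * Y K - 1) ≤ C * τ := by
  -- key identity
  have key : ∀ N, N ≤ K → (Y N)ᵀ * Y N - 1 =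
      ∑ k ∈ Finset.Icc 1 N, (τ ^ 2) • ((D k)ᵀ * D k) := by
    intro N
    induction N with
    | zero => intro _; simp [h0]
    | succ n ih =>
      intro hN
      have hn : n ≤ K := Nat.le_of_succ_le hN
      have h1 : 1 ≤ n + 1 := Nat.succ_le_succ (Nat.zero_le n)
      have hs := hstep (n+1) h1 hN
      have hl := hlin (n+1) h1 hN
      simp only [Nat.add_sub_cancel] at hs hl
      rw [Finset.sum_Icc_succ_top h1, ← ih hn, hs]
      have : (Y n + τ • D (n+1))ᵀ * (Y n + τ • D (n+1)) =
          (Y n)ᵀ * Y n + τ • ((D (n+1))ᵀ * Y n + (Y n)ᵀ * D (n+1))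
            + (τ^2) • ((D (n+1))ᵀ * D (n+1)) := by
        simp only [transpose_add, transpose_smul, Matrix.add_mul, Matrix.mul_add, Matrix.smul_mul,
          Matrix.mul_smul, smul_smul, smul_add, sq]
        abel
      rw [this, hl]
      simp
      abel
  have hkey := key K le_rfl
  have hbound : frobNorm ((Y K)ᵀ * Y K - 1) ≤
      τ ^ 2 * ∑ k ∈ Finset.Icc 1 K, (frobNorm (D k)) ^ 2 := by
    rw [frobNorm_eq_norm, hkey]
    calc ‖∑ k ∈ Finset.Icc 1 K, (τ ^ 2) • ((D k)ᵀ * D k)‖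
        ≤ ∑ k ∈ Finset.Icc 1 K, ‖(τ ^ 2) • ((D k)ᵀ * D k)‖ := norm_sum_le _ _
      _ ≤ ∑ k ∈ Finset.Icc 1 K, τ ^ 2 * (frobNorm (D k)) ^ 2 := by
          apply Finset.sum_le_sum
          intro k _
          rw [norm_smul, Real.norm_eq_abs, abs_of_nonneg (sq_nonneg τ)]
          apply mul_le_mul_of_nonneg_left _ (sq_nonneg τ)
          calc ‖(D k)ᵀ * D k‖ ≤ ‖(D k)ᵀ‖ * ‖D k‖ := Matrix.frobenius_norm_mul _ _
            _ = (frobNorm (D k))^2 := by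
                rw [Matrix.frobenius_norm_transpose, frobNorm_eq_norm, sq]
      _ = τ ^ 2 * ∑ k ∈ Finset.Icc 1 K, (frobNorm (D k)) ^ 2 := by
          rw [Finset.mul_sum]
  refine ⟨hbound, fun C hC => ?_⟩
  calc frobNorm ((Y K)ᵀ * Y K - 1)
      ≤ τ ^ 2 * ∑ k ∈ Finset.Icc 1 K, (frobNorm (D k)) ^ 2 := hbound
    _ ≤ τ ^ 2 * (C / τ) := by
        exact mul_le_mul_of_nonneg_left hC (sq_nonneg τ)
    _ = C * τ := by field_simp
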